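/- Let c : I → E be a regulated function into a Banach space and φ : [s₀,s₁] → ℝ a C¹ map with φ([s₀,s₁]) ⊆ I. If c is continuous (or more generally if φ is strictly monotone), then the change-of-variables formula holds: ∫_{s₀}^{s} φ'(r)·c(φ(r)) dr = ∫_{φ(s₀)}^{φ(s)} c(t) dt for all s ∈ [s₀,s₁]. -/

import Mathlib

open Filter Topology Set MeasureTheory intervalIntegral

variable {E : Type*} [NormedAddCommGroup E] [NormedSpace ℝ E]
variable {F : Type*} [NormedAddCommGroup F] [NormedSpace ℝ F]

/-- A function `c` is regulated on `[a,b]`: it has a right limit (within `[a,b]`)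
at every point of `[a,b)` and a left limit at every point of `(a,b]`. -/
def Regulated (a b : ℝ) (c : ℝ → E) : Prop :=
  (∀ t ∈ Set.Ico a b, ∃ L : E, Filter.Tendsto c (nhdsWithin t (Set.Ioc t b)) (nhds L)) ∧
  (∀ t ∈ Set.Ioc a b, ∃ L : E, Filter.Tendsto c (nhdsWithin t (Set.Ico a t)) (nhds L))

/-- A strong regulated (`0`-regulated) path: regulated, right-continuous on `[a,b)`,
and left-continuous at `b`. -/
def StrongRegulated (a b : ℝ) (c : ℝ → E) : Prop :=
  Regulated a b c ∧
  (∀ t ∈ Set.Ico a b, Filter.Tendsto c (nhdsWithin t (Set.Ioc t b)) (nhds (c t))) ∧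
  Filter.Tendsto c (nhdsWithin b (Set.Ico a b)) (nhds (c b))

/-- A `1`-regulated path `c` with (strong regulated) derivative `u`:
`c t = c t₀ + ∫_{t₀}^t u`. -/
def OneRegulated (t₀ t₁ : ℝ) (c u : ℝ → E) : Prop :=
  StrongRegulated t₀ t₁ u ∧ ∀ t ∈ Set.Icc t₀ t₁, c t = c t₀ + ∫ s in t₀..t, u s

/-- Sup norm of `f` over `[a,b]`. -/
noncomputable def supN (a b : ℝ) (f : ℝ → E) : ℝ := ⨆ t : Set.Icc a b, ‖f t.1‖

/-- Change of variables for integrals of regulated functions: if `c` is regulated on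
`[α,β]`, `φ : [s₀,s₁] → [α,β]` is `C¹`, and either `c` is continuous or `φ` is strictly
monotone, then `∫_{s₀}^{s} φ'(r) • c(φ(r)) dr = ∫_{φ(s₀)}^{φ(s)} c(t) dt`. -/
theorem regulated_change_of_variables
    {E : Type*} [NormedAddCommGroup E] [NormedSpace ℝ E] [CompleteSpace E]
    (α β : ℝ) (hαβ : α ≤ β) (c : ℝ → E) (hc : Regulated α β c)
    (s₀ s₁ : ℝ) (hs : s₀ ≤ s₁) (φ φ' : ℝ → ℝ)
    (hderiv : ∀ r ∈ Set.Icc s₀ s₁, HasDerivAt φ (φ' r) r)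
    (hcont : ContinuousOn φ' (Set.Icc s₀ s₁))
    (hmaps : Set.MapsTo φ (Set.Icc s₀ s₁) (Set.Icc α β))
    (hcase : ContinuousOn c (Set.Icc α β) ∨ StrictMonoOn φ (Set.Icc s₀ s₁)) :
    ∀ s ∈ Set.Icc s₀ s₁,
      (∫ r in s₀..s, φ' r • c (φ r)) = ∫ t in φ s₀..φ s, c t := by
  intro s hs'
  obtain ⟨hs0, hs1⟩ := hs'
  have hIcc : Set.Icc s₀ s ⊆ Set.Icc s₀ s₁ := Set.Icc_subset_Icc_right hs1
  rcases hcase with hcc | hmono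
  · -- continuous case
    have h := integral_comp_smul_deriv'' (f := φ) (f' := φ') (g := c) (a := s₀) (b := s)
      (fun x hx => ((hderiv x (hIcc ((Set.uIcc_of_le hs0) ▸ hx))).continuousAt.continuousWithinAt))
      ?_ ?_ ?_
    · simpa [Function.comp] using h
    · intro x hx
      rw [min_eq_left hs0, max_eq_right hs0] at hx
      exact ((hderiv x (hIcc (Set.Ioo_subset_Icc_self hx))).hasDerivWithinAt)
    · exact hcont.mono ((Set.uIcc_of_le hs0) ▸ hIcc)
    · refine hcc.mono ?_
      rw [Set.uIcc_of_le hs0]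
      exact (Set.image_mono hIcc).trans hmaps.image_subset
  · -- strictly monotone case
    have hφmono : MonotoneOn φ (Set.Icc s₀ s₁) := hmono.monotoneOn
    have hφ0s : φ s₀ ≤ φ s := hφmono ⟨le_rfl, hs⟩ ⟨hs0, hs1⟩ hs0
    have hcφ : ContinuousOn φ (Set.Icc s₀ s) := fun x hx =>
      (hderiv x (hIcc hx)).continuousAt.continuousWithinAt
    -- image of the open interval
    have himg : φ '' Set.Ioo s₀ s = Set.Ioo (φ s₀) (φ s) := by
      apply Set.Subset.antisymm
      · rintro _ ⟨x, hx, rfl⟩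
        exact ⟨hmono ⟨le_rfl, hs⟩ (hIcc (Set.Ioo_subset_Icc_self hx)) hx.1,
          hmono (hIcc (Set.Ioo_subset_Icc_self hx)) ⟨hs0, hs1⟩ hx.2⟩
      · exact intermediate_value_Ioo hs0 hcφ
    -- nonnegativity of φ' on Ioo s₀ s
    have hφ'nonneg : ∀ r ∈ Set.Ioo s₀ s, 0 ≤ φ' r := by
      intro r hr
      have hr1 : r ∈ Set.Icc s₀ s₁ := hIcc (Set.Ioo_subset_Icc_self hr)
      have hrs1 : r < s₁ := lt_of_lt_of_le hr.2 hs1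
      have hslope : Filter.Tendsto (slope φ r) (𝓝[>] r) (𝓝 (φ' r)) :=
        (hasDerivAt_iff_tendsto_slope.mp (hderiv r hr1)).mono_left
          (nhdsWithin_mono _ fun y hy => ne_of_gt hy)
      refine ge_of_tendsto hslope ?_
      filter_upwards [Ioo_mem_nhdsGT_of_mem ⟨le_rfl, hrs1⟩] with y hy
      have hφle : φ r ≤ φ y :=
        (hmono hr1 ⟨hr1.1.trans hy.1.le, hy.2.le⟩ hy.1).le
      have : (0:ℝ) < y - r := sub_pos.mpr hy.1
      simpa [slope_def_field] using div_nonneg (sub_nonneg.mpr hφle) this.le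
    -- change of variables on the open interval
    have hcov : ∫ t in φ '' Set.Ioo s₀ s, c t
        = ∫ r in Set.Ioo s₀ s, |φ' r| • c (φ r) :=
      MeasureTheory.integral_image_eq_integral_abs_deriv_smul measurableSet_Ioo
        (fun x hx => (hderiv x (hIcc (Set.Ioo_subset_Icc_self hx))).hasDerivWithinAt)
        (hmono.injOn.mono fun x hx => hIcc (Set.Ioo_subset_Icc_self hx)) c
    rw [himg] at hcov
    rw [intervalIntegral.integral_of_le hs0, intervalIntegral.integral_of_le hφ0s,
      MeasureTheory.integral_Ioc_eq_integral_Ioo, MeasureTheory.integral_Ioc_eq_integral_Ioo,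
      hcov]
    refine MeasureTheory.setIntegral_congr_fun measurableSet_Ioo fun r hr => ?_
    rw [abs_of_nonneg (hφ'nonneg r hr)]
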